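/- Let H = 𝒫 ⋊ 𝓗 ⋉ 𝒫^op be the double crossed product bialgebroid of a Hopf algebra 𝓗 acting on a module algebra 𝒫, with T(P⋊h⋉Q) = S(h⁽³⁾)(Q) ⋊ S(h⁽²⁾) ⋉ S̃_δ(h⁽¹⁾)(P). Then for every 𝔥 = P⋊h⋉Q ∈ H, T(𝔥⁽¹⁾)⁽¹⁾𝔥⁽²⁾ ⊗_𝒫 T(𝔥⁽¹⁾)⁽²⁾ = 1_H ⊗_𝒫 T(𝔥). -/

import Mathlib

open TensorProduct

noncomputable section

/-- The data of a (pre-)bialgebroid: total algebra `H`, base algebra `R`,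
source map `α` (algebra map), target map `β` (anti-algebra map), a linear lift
`Δ : H → H ⊗[k] H` of the coproduct, and the counit `ε`. -/
structure PreBialgebroid (k H R : Type) [Field k] [Ring H] [Algebra k H]
    [Ring R] [Algebra k R] where
  α : R →ₐ[k] H
  β : R →ₗ[k] H
  β_one : β 1 = 1
  β_mul : ∀ a b : R, β (a * b) = β b * β a
  αβ_comm : ∀ a b : R, α a * β b = β b * α a
  Δ : H →ₗ[k] H ⊗[k] H
  ε : H →ₗ[k] R

namespace PreBialgebroid

variable {k H R : Type} [Field k] [Ring H] [Algebra k H] [Ring R] [Algebra k R]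
variable (D : PreBialgebroid k H R)

/-- The submodule of `H ⊗[k] H` by which one divides to obtain `H ⊗_R H`. -/
def rel2 : Submodule k (H ⊗[k] H) :=
  Submodule.span k {z | ∃ (r : R) (x y : H), z = (D.β r * x) ⊗ₜ[k] y - x ⊗ₜ[k] (D.α r * y)}

/-- The projection `H ⊗[k] H → H ⊗_R H`. -/
def π2 : H ⊗[k] H →ₗ[k] (H ⊗[k] H) ⧸ D.rel2 := D.rel2.mkQ

/-- Relations for the triple tensor product `H ⊗_R H ⊗_R H` (right associated). -/
def rel3 : Submodule k (H ⊗[k] (H ⊗[k] H)) :=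
  Submodule.span k {z |
    (∃ (r : R) (x y w : H), z = (D.β r * x) ⊗ₜ[k] (y ⊗ₜ[k] w) - x ⊗ₜ[k] ((D.α r * y) ⊗ₜ[k] w)) ∨
    (∃ (r : R) (x y w : H), z = x ⊗ₜ[k] ((D.β r * y) ⊗ₜ[k] w) - x ⊗ₜ[k] (y ⊗ₜ[k] (D.α r * w)))}

def π3 : H ⊗[k] (H ⊗[k] H) →ₗ[k] (H ⊗[k] (H ⊗[k] H)) ⧸ D.rel3 := D.rel3.mkQ

/-- For a linear map `f : H → H`, the map `x ⊗ y ↦ f x * y`. -/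
def mulL (f : H →ₗ[k] H) : H ⊗[k] H →ₗ[k] H :=
  TensorProduct.lift
    (LinearMap.mk₂ k (fun x y => f x * y)
      (by intro x x' y; simp [map_add, add_mul])
      (by intro c x y; simp [map_smul, smul_mul_assoc])
      (by intro x y y'; simp [mul_add])
      (by intro c x y; simp [mul_smul_comm]))

/-- For a linear map `f : H → H`, the map `x ⊗ y ↦ f y * x`. -/
def mulR (f : H →ₗ[k] H) : H ⊗[k] H →ₗ[k] H :=
  TensorProduct.lift
    (LinearMap.mk₂ k (fun x y => f y * x)
      (by intro x x' y; simp [mul_add])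
      (by intro c x y; simp [mul_smul_comm])
      (by intro x y y'; simp [map_add, add_mul])
      (by intro c x y; simp [map_smul, smul_mul_assoc]))

/-- The (lift of the) Connes–Moscovici cyclic operator in degree 2:
`x ⊗ y ↦ Δ(T x) · (y ⊗ 1)`. -/
def tau2 (T : H →ₗ[k] H) : H ⊗[k] H →ₗ[k] H ⊗[k] H :=
  TensorProduct.lift
    (LinearMap.mk₂ k (fun x y => D.Δ (T x) * (y ⊗ₜ[k] (1 : H)))
      (by intro x x' y; simp [map_add, add_mul])
      (by intro c x y; simp [map_smul, smul_mul_assoc])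
      (by intro x y y'; simp [add_tmul, mul_add])
      (by intro c x y; simp [← TensorProduct.smul_tmul', mul_smul_comm]))

/-- The bialgebroid axioms, stated for the chosen linear lift `Δ` of the coproduct
modulo the relations defining `H ⊗_R H`. -/
structure IsBialgebroid : Prop where
  Δ_one : D.π2 (D.Δ 1) = D.π2 ((1 : H) ⊗ₜ[k] (1 : H))
  coassoc : ∀ h : H,
    D.π3 ((TensorProduct.assoc k H H H) ((D.Δ.rTensor H) (D.Δ h))) =
      D.π3 ((D.Δ.lTensor H) (D.Δ h))
  Δ_cp3 : ∀ (h : H) (r : R),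
    D.π2 (D.Δ h * (D.β r ⊗ₜ[k] (1 : H) - (1 : H) ⊗ₜ[k] D.α r)) = 0
  Δ_mul : ∀ a b : H, D.π2 (D.Δ (a * b)) = D.π2 (D.Δ a * D.Δ b)
  Δ_left : ∀ (r : R) (h : H),
    D.π2 (D.Δ (D.α r * h)) = D.π2 ((D.α r ⊗ₜ[k] (1 : H)) * D.Δ h)
  Δ_right : ∀ (r : R) (h : H),
    D.π2 (D.Δ (D.β r * h)) = D.π2 (((1 : H) ⊗ₜ[k] D.β r) * D.Δ h)
  ε_one : D.ε 1 = 1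
  ε_left : ∀ (r : R) (h : H), D.ε (D.α r * h) = r * D.ε h
  ε_right : ∀ (r : R) (h : H), D.ε (D.β r * h) = D.ε h * r
  counit_l : ∀ h : H, mulL (D.α.toLinearMap ∘ₗ D.ε) (D.Δ h) = h
  counit_r : ∀ h : H, mulR (D.β ∘ₗ D.ε) (D.Δ h) = h

/-- The para-Hopf algebroid axioms for a para-antipode `T`. -/
structure IsParaHopf (T : H →ₗ[k] H) : Prop where
  bialgebroid : D.IsBialgebroid
  T_one : T 1 = 1
  T_antimul : ∀ a b : H, T (a * b) = T b * T a
  PH1 : ∀ r : R, T (D.β r) = D.α r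
  PH2 : ∀ h : H, mulL T (D.Δ h) = D.β (D.ε (T h))
  T_invol : ∀ h : H, T (T h) = h
  PH3 : ∀ h : H, D.π2 (tau2 D T (D.Δ h)) = D.π2 ((1 : H) ⊗ₜ[k] T h)

end PreBialgebroid

open Coalgebra in
/-- The convolution `δ * S` for a character `δ`. -/
def twistedAntipode {k 𝓗 : Type} [Field k] [Ring 𝓗] [HopfAlgebra k 𝓗]
    (δ : 𝓗 →ₐ[k] k) : 𝓗 →ₗ[k] 𝓗 :=
  (TensorProduct.lift
    (LinearMap.mk₂ k (fun x y => δ x • HopfAlgebra.antipode (R := k) y)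
      (by intro x x' y; simp [map_add, add_smul])
      (by intro c x y; simp [mul_smul])
      (by intro x y y'; simp [map_add, smul_add])
      (by intro c x y; simp only [map_smul]; rw [smul_comm]))) ∘ₗ comul

open Coalgebra

section DoubleCrossedProduct

variable {k 𝓗 PAlg HH : Type} [Field k] [Ring 𝓗] [HopfAlgebra k 𝓗]
  [Ring PAlg] [Algebra k PAlg] [Ring HH] [Algebra k HH]

/-- The iterated coproduct `Δ² : 𝓗 → 𝓗 ⊗ (𝓗 ⊗ 𝓗)`. -/
def comul2 : 𝓗 →ₗ[k] 𝓗 ⊗[k] (𝓗 ⊗[k] 𝓗) :=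
  (LinearMap.lTensor 𝓗 (comul (R := k))) ∘ₗ comul

/-- `a ⊗ b ⊗ c ↦ (P₁ · a(P₂)) ⊗ (b h₂) ⊗ (c(Q₂) Q₁)`, expressing the double crossed
product multiplication. -/
def dcpMul (ρ : 𝓗 →ₗ[k] PAlg →ₗ[k] PAlg) (P₁ P₂ Q₁ Q₂ : PAlg) (h₂ : 𝓗) :
    𝓗 ⊗[k] (𝓗 ⊗[k] 𝓗) →ₗ[k] PAlg ⊗[k] (𝓗 ⊗[k] PAlg) :=
  TensorProduct.map (LinearMap.mulLeft k P₁ ∘ₗ ρ.flip P₂)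
    (TensorProduct.map (LinearMap.mulRight k h₂) (LinearMap.mulRight k Q₁ ∘ₗ ρ.flip Q₂))

/-- The cyclic permutation `u ⊗ (v ⊗ w) ↦ w ⊗ (v ⊗ u)`. -/
def cyc3 (M N P : Type) [AddCommGroup M] [AddCommGroup N] [AddCommGroup P]
    [Module k M] [Module k N] [Module k P] :
    (M ⊗[k] (N ⊗[k] P)) ≃ₗ[k] (P ⊗[k] (N ⊗[k] M)) :=
  (TensorProduct.congr (LinearEquiv.refl k M) (TensorProduct.comm k N P)).trans <|
    (TensorProduct.assoc k M P N).symm.trans <|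
      (TensorProduct.congr (TensorProduct.comm k M P) (LinearEquiv.refl k N)).trans <|
        (TensorProduct.assoc k P M N).trans
          (TensorProduct.congr (LinearEquiv.refl k P) (TensorProduct.comm k M N))

/-- `a ⊗ b ⊗ c ↦ S(c)(Q) ⊗ S(b) ⊗ S̃_δ(a)(P)`, expressing the para-antipode of the
double crossed product. -/
def dcpT (ρ : 𝓗 →ₗ[k] PAlg →ₗ[k] PAlg) (δ : 𝓗 →ₐ[k] k) (P Q : PAlg) :
    𝓗 ⊗[k] (𝓗 ⊗[k] 𝓗) →ₗ[k] PAlg ⊗[k] (𝓗 ⊗[k] PAlg) :=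
  (cyc3 (k := k) PAlg 𝓗 PAlg).toLinearMap ∘ₗ
    TensorProduct.map (ρ.flip P ∘ₗ twistedAntipode δ)
      (TensorProduct.map (HopfAlgebra.antipode (R := k))
        (ρ.flip Q ∘ₗ HopfAlgebra.antipode (R := k)))

/-- `x ⊗ y ↦ (P ⊗ x ⊗ 1) ⊗ (1 ⊗ y ⊗ Q)`, expressing the coproduct of the double
crossed product via a linear identification `e`. -/
def dcpΔ (e : (PAlg ⊗[k] (𝓗 ⊗[k] PAlg)) ≃ₗ[k] HH) (P Q : PAlg) :
    𝓗 ⊗[k] 𝓗 →ₗ[k] HH ⊗[k] HH :=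
  TensorProduct.map
    (e.toLinearMap ∘ₗ TensorProduct.mk k PAlg (𝓗 ⊗[k] PAlg) P ∘ₗ
      (TensorProduct.mk k 𝓗 PAlg).flip 1)
    (e.toLinearMap ∘ₗ TensorProduct.mk k PAlg (𝓗 ⊗[k] PAlg) 1 ∘ₗ
      (TensorProduct.mk k 𝓗 PAlg).flip Q)

end DoubleCrossedProduct


/-! ### Auxiliary Hopf-algebra lemmas (not in this Mathlib version) -/
section HopfAux
open TensorProduct Coalgebra HopfAlgebra
variable {k 𝓗 : Type} [Field k] [Ring 𝓗] [HopfAlgebra k 𝓗]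

local notation "εH" => Coalgebra.counit (R := k) (A := 𝓗)
local notation "CmH" => Coalgebra.comul (R := k) (A := 𝓗)
local notation "SH" => HopfAlgebra.antipode (R := k) (A := 𝓗)

lemma opL {M : Type} [AddCommGroup M] [Module k M] {a : 𝓗} (r : Coalgebra.Repr k a (𝓗 × 𝓗))
    (G : 𝓗 →ₗ[k] M) :
    ∑ i ∈ r.index, εH (r.left i) • G (r.right i) = G a := by
  have h := congrArg (⇑((TensorProduct.lid k M).toLinearMap ∘ₗ LinearMap.lTensor k G))
    (Coalgebra.sum_counit_tmul_eq (R := k) r)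
  simp only [map_sum, LinearMap.coe_comp, LinearEquiv.coe_coe, Function.comp_apply,
    LinearMap.lTensor_tmul, TensorProduct.lid_tmul] at h
  simpa using h

lemma opR {M : Type} [AddCommGroup M] [Module k M] {a : 𝓗} (r : Coalgebra.Repr k a (𝓗 × 𝓗))
    (G : 𝓗 →ₗ[k] M) :
    ∑ i ∈ r.index, εH (r.right i) • G (r.left i) = G a := by
  have h := congrArg (⇑((TensorProduct.rid k M).toLinearMap ∘ₗ LinearMap.rTensor k G))
    (Coalgebra.sum_tmul_counit_eq (R := k) r)
  simp only [map_sum, LinearMap.coe_comp, LinearEquiv.coe_coe, Function.comp_apply,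
    LinearMap.rTensor_tmul, TensorProduct.rid_tmul] at h
  simpa using h

lemma hco {M : Type} [AddCommGroup M] [Module k M] {a : 𝓗}
    (Φ : 𝓗 ⊗[k] (𝓗 ⊗[k] 𝓗) →ₗ[k] M) (r : Coalgebra.Repr k a (𝓗 × 𝓗))
    (a₁ : (i : r.ι) → Coalgebra.Repr k (r.left i) (𝓗 × 𝓗))
    (a₂ : (i : r.ι) → Coalgebra.Repr k (r.right i) (𝓗 × 𝓗)) :
    ∑ i ∈ r.index, ∑ j ∈ (a₁ i).index,
        Φ ((a₁ i).left j ⊗ₜ[k] ((a₁ i).right j ⊗ₜ[k] r.right i)) =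
      ∑ i ∈ r.index, ∑ j ∈ (a₂ i).index,
        Φ (r.left i ⊗ₜ[k] ((a₂ i).left j ⊗ₜ[k] (a₂ i).right j)) := by
  have h2 := congrArg (⇑Φ) (Coalgebra.sum_tmul_tmul_eq (R := k) r a₁ a₂)
  simp only [map_sum] at h2
  convert h2 using 2


lemma counit_antipode (a : 𝓗) : εH (SH a) = εH a := by
  set r := Coalgebra.Repr.arbitrary k a with hr
  have h2 : ∑ i ∈ r.index, εH (SH (r.left i) * r.right i) = εH a := by
    rw [← map_sum, HopfAlgebra.sum_antipode_mul_eq_algebraMap_counit r]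
    simp [Algebra.smul_def]
  calc εH (SH a) = ∑ i ∈ r.index, εH (r.right i) • εH (SH (r.left i)) :=
        (opR r ((Coalgebra.counit (R := k)) ∘ₗ SH)).symm
    _ = ∑ i ∈ r.index, εH (SH (r.left i) * r.right i) := by
        apply Finset.sum_congr rfl; intro i _
        rw [Bialgebra.counit_mul]; rw [smul_eq_mul, mul_comm]
    _ = εH a := h2

/-- the candidate `τ ∘ (S ⊗ S) ∘ Δ`. -/
def GG : 𝓗 →ₗ[k] 𝓗 ⊗[k] 𝓗 :=
  (TensorProduct.comm k 𝓗 𝓗).toLinearMap ∘ₗ TensorProduct.map SH SH ∘ₗ CmH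

lemma GG_apply (a : 𝓗) :
    GG (k := k) a = (TensorProduct.comm k 𝓗 𝓗) (TensorProduct.map SH SH (CmH a)) := rfl

/-- claim (i) : `∑ Δ(S(a⁽¹⁾)) Δ(a⁽²⁾) = ε(a) 1`. -/
lemma claim1 {b : 𝓗} (rb : Coalgebra.Repr k b (𝓗 × 𝓗)) :
    ∑ i ∈ rb.index, CmH (SH (rb.left i)) * CmH (rb.right i)
      = algebraMap k (𝓗 ⊗[k] 𝓗) (εH b) := by
  have : ∑ i ∈ rb.index, CmH (SH (rb.left i)) * CmH (rb.right i)
      = CmH (∑ i ∈ rb.index, SH (rb.left i) * rb.right i) := by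
    rw [map_sum]
    exact Finset.sum_congr rfl fun i _ => (Bialgebra.comul_mul _ _).symm
  rw [this, HopfAlgebra.sum_antipode_mul_eq_algebraMap_counit rb, Bialgebra.comul_algebraMap]

/-- claim (ii) : `∑ Δ(a⁽¹⁾) · G(a⁽²⁾) = ε(a) 1`. -/
lemma claim2 {b : 𝓗} (rb : Coalgebra.Repr k b (𝓗 × 𝓗)) :
    ∑ i ∈ rb.index, CmH (rb.left i) * GG (k := k) (rb.right i)
      = algebraMap k (𝓗 ⊗[k] 𝓗) (εH b) := by
  classical
  set rL := fun i => Coalgebra.Repr.arbitrary k (rb.left i)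
  set rT := fun i => Coalgebra.Repr.arbitrary k (rb.right i)
  set mulB := LinearMap.mul' k (𝓗 ⊗[k] 𝓗)
  set Ψ₂ : 𝓗 ⊗[k] (𝓗 ⊗[k] 𝓗) →ₗ[k] 𝓗 ⊗[k] 𝓗 :=
    mulB ∘ₗ TensorProduct.map CmH
      ((TensorProduct.comm k 𝓗 𝓗).toLinearMap ∘ₗ TensorProduct.map SH SH) with hΨ₂
  have hΨ₂t : ∀ x y z : 𝓗, Ψ₂ (x ⊗ₜ[k] (y ⊗ₜ[k] z)) = CmH x * (SH z ⊗ₜ[k] SH y) := by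
    intro x y z; simp [hΨ₂, mulB, LinearMap.mul'_apply]
  calc ∑ i ∈ rb.index, CmH (rb.left i) * GG (k := k) (rb.right i)
      = ∑ i ∈ rb.index, ∑ j ∈ (rT i).index,
          Ψ₂ (rb.left i ⊗ₜ[k] ((rT i).left j ⊗ₜ[k] (rT i).right j)) := by
        apply Finset.sum_congr rfl; intro i _
        rw [GG_apply, ← (rT i).eq]
        rw [map_sum, map_sum, Finset.mul_sum]
        apply Finset.sum_congr rfl; intro j _
        rw [hΨ₂t]; simp
    _ = ∑ i ∈ rb.index, ∑ j ∈ (rL i).index,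
          Ψ₂ ((rL i).left j ⊗ₜ[k] ((rL i).right j ⊗ₜ[k] rb.right i)) := (hco Ψ₂ rb rL rT).symm
    _ = ∑ i ∈ rb.index, ∑ j ∈ (rL i).index, ∑ m ∈ (Coalgebra.Repr.arbitrary k ((rL i).left j)).index,
          (TensorProduct.map (LinearMap.mulRight k (SH (rb.right i)))
            (LinearMap.mul' k 𝓗 ∘ₗ LinearMap.lTensor 𝓗 SH))
          ((Coalgebra.Repr.arbitrary k ((rL i).left j)).left m ⊗ₜ[k]
            ((Coalgebra.Repr.arbitrary k ((rL i).left j)).right m ⊗ₜ[k] (rL i).right j)) := by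
        apply Finset.sum_congr rfl; intro i _
        apply Finset.sum_congr rfl; intro j _
        rw [hΨ₂t, ← (Coalgebra.Repr.arbitrary k ((rL i).left j)).eq, Finset.sum_mul]
        apply Finset.sum_congr rfl; intro m _
        simp [Algebra.TensorProduct.tmul_mul_tmul, LinearMap.mul'_apply]
    _ = ∑ i ∈ rb.index, ∑ j ∈ (rL i).index, ∑ m ∈ (Coalgebra.Repr.arbitrary k ((rL i).right j)).index,
          (TensorProduct.map (LinearMap.mulRight k (SH (rb.right i)))
            (LinearMap.mul' k 𝓗 ∘ₗ LinearMap.lTensor 𝓗 SH))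
          ((rL i).left j ⊗ₜ[k]
            ((Coalgebra.Repr.arbitrary k ((rL i).right j)).left m ⊗ₜ[k]
             (Coalgebra.Repr.arbitrary k ((rL i).right j)).right m)) := by
        apply Finset.sum_congr rfl; intro i _
        exact hco _ (rL i) _ _
    _ = ∑ i ∈ rb.index, ∑ j ∈ (rL i).index,
          εH ((rL i).right j) • (((rL i).left j * SH (rb.right i)) ⊗ₜ[k] (1 : 𝓗)) := by
        apply Finset.sum_congr rfl; intro i _
        apply Finset.sum_congr rfl; intro j _
        simp only [TensorProduct.map_tmul, LinearMap.coe_comp, Function.comp_apply,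
          LinearMap.lTensor_tmul, LinearMap.mul'_apply, LinearMap.mulRight_apply]
        rw [← TensorProduct.tmul_sum,
          HopfAlgebra.sum_mul_antipode_eq_algebraMap_counit (Coalgebra.Repr.arbitrary k ((rL i).right j)),
          Algebra.algebraMap_eq_smul_one, TensorProduct.tmul_smul]
    _ = ∑ i ∈ rb.index, (rb.left i * SH (rb.right i)) ⊗ₜ[k] (1 : 𝓗) := by
        apply Finset.sum_congr rfl; intro i _
        exact opR (rL i) (((TensorProduct.mk k 𝓗 𝓗).flip 1) ∘ₗ LinearMap.mulRight k (SH (rb.right i)))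
    _ = algebraMap k (𝓗 ⊗[k] 𝓗) (εH b) := by
        rw [← sum_tmul, HopfAlgebra.sum_mul_antipode_eq_algebraMap_counit rb,
          Algebra.TensorProduct.algebraMap_apply]

lemma anticomul (a : 𝓗) :
    CmH (SH a) = (TensorProduct.comm k 𝓗 𝓗) (TensorProduct.map SH SH (CmH a)) := by
  classical
  set r := Coalgebra.Repr.arbitrary k a
  set rL := fun i => Coalgebra.Repr.arbitrary k (r.left i)
  set rT := fun i => Coalgebra.Repr.arbitrary k (r.right i)
  set F : 𝓗 →ₗ[k] 𝓗 ⊗[k] 𝓗 := CmH ∘ₗ SH with hF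
  set mulB := LinearMap.mul' k (𝓗 ⊗[k] 𝓗)
  set Φ₃ : 𝓗 ⊗[k] (𝓗 ⊗[k] 𝓗) →ₗ[k] 𝓗 ⊗[k] 𝓗 :=
    mulB ∘ₗ TensorProduct.map F (mulB ∘ₗ TensorProduct.map CmH (GG (k := k))) with hΦ₃
  have hΦ₃t : ∀ x y z : 𝓗, Φ₃ (x ⊗ₜ[k] (y ⊗ₜ[k] z)) = F x * (CmH y * GG (k := k) z) := by
    intro x y z; simp [hΦ₃, mulB, LinearMap.mul'_apply]
  have key : GG (k := k) a = F a := by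
    calc GG (k := k) a = ∑ i ∈ r.index, εH (r.left i) • GG (k := k) (r.right i) :=
          (opL r (GG (k := k))).symm
      _ = ∑ i ∈ r.index, ∑ j ∈ (rL i).index,
            Φ₃ ((rL i).left j ⊗ₜ[k] ((rL i).right j ⊗ₜ[k] r.right i)) := by
          apply Finset.sum_congr rfl; intro i _
          rw [Algebra.smul_def, ← claim1 (rL i), Finset.sum_mul]
          apply Finset.sum_congr rfl; intro j _
          rw [hΦ₃t, mul_assoc]; rfl
      _ = ∑ i ∈ r.index, ∑ j ∈ (rT i).index,
            Φ₃ (r.left i ⊗ₜ[k] ((rT i).left j ⊗ₜ[k] (rT i).right j)) := hco Φ₃ r rL rT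
      _ = ∑ i ∈ r.index, εH (r.right i) • F (r.left i) := by
          apply Finset.sum_congr rfl; intro i _
          have : ∑ j ∈ (rT i).index, Φ₃ (r.left i ⊗ₜ[k] ((rT i).left j ⊗ₜ[k] (rT i).right j))
              = F (r.left i) * ∑ j ∈ (rT i).index, CmH ((rT i).left j) * GG (k := k) ((rT i).right j) := by
            rw [Finset.mul_sum]
            exact Finset.sum_congr rfl fun j _ => hΦ₃t _ _ _
          rw [this, claim2 (rT i), ← Algebra.commutes, Algebra.smul_def]
      _ = F a := opR r F
  rw [← GG_apply, key]; rfl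


/-- A representation of `comul (S a)` obtained from one of `comul a`. -/
def antipodeRepr {a : 𝓗} (r : Coalgebra.Repr k a (𝓗 × 𝓗)) : Coalgebra.Repr k (SH a) (𝓗 × 𝓗) where
  index := r.index
  left := fun i => SH (r.right i)
  right := fun i => SH (r.left i)
  eq := by
    rw [anticomul (k := k) a, ← r.eq]
    simp [map_sum]

@[simp] lemma antipodeRepr_index {a : 𝓗} (r : Coalgebra.Repr k a (𝓗 × 𝓗)) :
    (antipodeRepr r).index = r.index := rfl
@[simp] lemma antipodeRepr_left {a : 𝓗} (r : Coalgebra.Repr k a (𝓗 × 𝓗)) (i : r.ι) :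
    (antipodeRepr r).left i = SH (r.right i) := rfl
@[simp] lemma antipodeRepr_right {a : 𝓗} (r : Coalgebra.Repr k a (𝓗 × 𝓗)) (i : r.ι) :
    (antipodeRepr r).right i = SH (r.left i) := rfl

/-- The canonical representation of `comul 1`. -/
def reprOne : Coalgebra.Repr k (1 : 𝓗) (𝓗 × 𝓗) where
  index := {((1 : 𝓗), (1 : 𝓗))}
  left := fun _ => 1
  right := fun _ => 1
  eq := by simp [Algebra.TensorProduct.one_def]

end HopfAux


/-! ### quotient lemmas for `PreBialgebroid` -/
section QuotAux
open TensorProduct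
variable {k H R : Type} [Field k] [Ring H] [Algebra k H] [Ring R] [Algebra k R]
variable (D : PreBialgebroid k H R)

lemma rel2_mul_right {z : H ⊗[k] H} (hz : z ∈ D.rel2) (w : H ⊗[k] H) :
    z * w ∈ D.rel2 := by
  induction hz using Submodule.span_induction with
  | mem x hx =>
    obtain ⟨r, x₀, y₀, rfl⟩ := hx
    induction w with
    | zero => simpa using Submodule.zero_mem D.rel2
    | add u v hu hv => rw [mul_add]; exact Submodule.add_mem _ hu hv
    | tmul u v =>
      rw [sub_mul]
      simp only [Algebra.TensorProduct.tmul_mul_tmul]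
      exact Submodule.subset_span ⟨r, x₀ * u, y₀ * v, by rw [mul_assoc, mul_assoc]⟩
  | zero => simpa using Submodule.zero_mem D.rel2
  | add u v _ _ hu hv => rw [add_mul]; exact Submodule.add_mem _ hu hv
  | smul c u _ hu => rw [smul_mul_assoc]; exact Submodule.smul_mem _ c hu

lemma pi2_eq_iff {u v : H ⊗[k] H} : D.π2 u = D.π2 v ↔ u - v ∈ D.rel2 := by
  rw [PreBialgebroid.π2, Submodule.mkQ_apply, Submodule.mkQ_apply, Submodule.Quotient.eq]

lemma pi2_mul_congr {u v : H ⊗[k] H} (h : D.π2 u = D.π2 v) (w : H ⊗[k] H) :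
    D.π2 (u * w) = D.π2 (v * w) := by
  rw [pi2_eq_iff] at h ⊢
  rw [← sub_mul]
  exact rel2_mul_right D h w

lemma pi2_beta_swap (C : R) (v : H) :
    D.π2 (D.β C ⊗ₜ[k] v) = D.π2 ((1 : H) ⊗ₜ[k] (D.α C * v)) := by
  rw [pi2_eq_iff]
  refine Submodule.subset_span ⟨C, 1, v, ?_⟩
  rw [mul_one]

end QuotAux

/-! ### Lemmas about the double crossed product -/
section DCPAux
open TensorProduct Coalgebra HopfAlgebra

variable {k 𝓗 PAlg HH : Type} [Field k] [Ring 𝓗] [HopfAlgebra k 𝓗]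
  [Ring PAlg] [Algebra k PAlg] [Ring HH] [Algebra k HH]

local notation "εH" => Coalgebra.counit (R := k) (A := 𝓗)
local notation "CmH" => Coalgebra.comul (R := k) (A := 𝓗)
local notation "SH" => HopfAlgebra.antipode (R := k) (A := 𝓗)

lemma cyc3_tmul {M N P : Type} [AddCommGroup M] [AddCommGroup N] [AddCommGroup P]
    [Module k M] [Module k N] [Module k P] (u : M) (v : N) (w : P) :
    cyc3 (k := k) M N P (u ⊗ₜ[k] (v ⊗ₜ[k] w)) = w ⊗ₜ[k] (v ⊗ₜ[k] u) := by
  simp [cyc3]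

variable (δ : 𝓗 →ₐ[k] k) (ρ : 𝓗 →ₗ[k] PAlg →ₗ[k] PAlg)
  (e : (PAlg ⊗[k] (𝓗 ⊗[k] PAlg)) ≃ₗ[k] HH)

/-- Abbreviation for `e (P ⊗ h ⊗ Q)`. -/
def EE (P : PAlg) (h : 𝓗) (Q : PAlg) : HH := e (P ⊗ₜ[k] (h ⊗ₜ[k] Q))

/-- `EE` as a linear map in the middle variable. -/
def EEm (P Q : PAlg) : 𝓗 →ₗ[k] HH :=
  e.toLinearMap ∘ₗ TensorProduct.mk k PAlg (𝓗 ⊗[k] PAlg) P ∘ₗ (TensorProduct.mk k 𝓗 PAlg).flip Q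

@[simp] lemma EEm_apply (P Q : PAlg) (h : 𝓗) : EEm e P Q h = EE e P h Q := rfl

lemma eSum {ι : Type*} (s : Finset ι) (f : ι → PAlg ⊗[k] (𝓗 ⊗[k] PAlg)) :
    e (∑ i ∈ s, f i) = ∑ i ∈ s, e (f i) :=
  map_sum e.toLinearMap f s

@[simp] lemma EE_smul_left (c : k) (P : PAlg) (h : 𝓗) (Q : PAlg) :
    EE e (c • P) h Q = c • EE e P h Q := by
  rw [EE, ← TensorProduct.smul_tmul', map_smul, EE]

@[simp] lemma EE_smul_right (c : k) (P : PAlg) (h : 𝓗) (Q : PAlg) :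
    EE e P h (c • Q) = c • EE e P h Q := by
  simp [EE, TensorProduct.tmul_smul]

section Mul
variable (hemul : ∀ (P₁ P₂ Q₁ Q₂ : PAlg) (h₁ h₂ : 𝓗),
      e (P₁ ⊗ₜ[k] (h₁ ⊗ₜ[k] Q₁)) * e (P₂ ⊗ₜ[k] (h₂ ⊗ₜ[k] Q₂)) =
        e (dcpMul ρ P₁ P₂ Q₁ Q₂ h₂ (comul2 h₁)))

lemma comul2_repr (h₁ : 𝓗) (r : Coalgebra.Repr k h₁ (𝓗 × 𝓗))
    (s : (i : r.ι) → Coalgebra.Repr k (r.right i) (𝓗 × 𝓗)) :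
    comul2 (k := k) h₁ =
      ∑ i ∈ r.index, ∑ j ∈ (s i).index,
        r.left i ⊗ₜ[k] ((s i).left j ⊗ₜ[k] (s i).right j) := by
  rw [comul2, LinearMap.comp_apply, ← r.eq, map_sum]
  apply Finset.sum_congr rfl; intro i _
  rw [LinearMap.lTensor_tmul, ← (s i).eq, TensorProduct.tmul_sum]

include hemul in
lemma mulEE (P₁ : PAlg) (h₁ : 𝓗) (Q₁ P₂ : PAlg) (h₂ : 𝓗) (Q₂ : PAlg)
    (r : Coalgebra.Repr k h₁ (𝓗 × 𝓗)) (s : (i : r.ι) → Coalgebra.Repr k (r.right i) (𝓗 × 𝓗)) :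
    EE e P₁ h₁ Q₁ * EE e P₂ h₂ Q₂ =
      ∑ i ∈ r.index, ∑ j ∈ (s i).index,
        EE e (P₁ * ρ (r.left i) P₂) ((s i).left j * h₂) (ρ ((s i).right j) Q₂ * Q₁) := by
  rw [EE, EE, hemul, comul2_repr (k := k) h₁ r s, map_sum, eSum]
  apply Finset.sum_congr rfl; intro i _
  rw [map_sum, eSum]
  apply Finset.sum_congr rfl; intro j _
  simp [dcpMul, EE]

include hemul in
lemma oneMulEE (hρ1 : ∀ p : PAlg, ρ 1 p = p) (P₁ Q₁ P₂ : PAlg) (h₂ : 𝓗) (Q₂ : PAlg) :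
    EE e P₁ 1 Q₁ * EE e P₂ h₂ Q₂ = EE e (P₁ * P₂) h₂ (ρ 1 Q₂ * Q₁) := by
  rw [mulEE ρ e hemul P₁ 1 Q₁ P₂ h₂ Q₂ reprOne (fun _ => reprOne)]
  simp [reprOne, hρ1]

include hemul in
lemma mulAlphaEE (hρalg1 : ∀ h : 𝓗, ρ h (1 : PAlg) = counit (R := k) h • (1 : PAlg))
    (A : PAlg) (b : 𝓗) (C rr : PAlg) (rb : Coalgebra.Repr k b (𝓗 × 𝓗)) :
    EE e A b C * EE e rr 1 1 =
      ∑ i ∈ rb.index, EE e (A * ρ (rb.left i) rr) (rb.right i) C := by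
  rw [mulEE ρ e hemul A b C rr 1 1 rb (fun i => Coalgebra.Repr.arbitrary k (rb.right i))]
  apply Finset.sum_congr rfl; intro i _
  calc ∑ j ∈ (Coalgebra.Repr.arbitrary k (rb.right i)).index,
        EE e (A * ρ (rb.left i) rr) ((Coalgebra.Repr.arbitrary k (rb.right i)).left j * 1)
          (ρ ((Coalgebra.Repr.arbitrary k (rb.right i)).right j) 1 * C)
      = ∑ j ∈ (Coalgebra.Repr.arbitrary k (rb.right i)).index,
          εH ((Coalgebra.Repr.arbitrary k (rb.right i)).right j) •
            (EEm e (A * ρ (rb.left i) rr) C) ((Coalgebra.Repr.arbitrary k (rb.right i)).left j) := by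
        apply Finset.sum_congr rfl; intro j _
        rw [hρalg1, mul_one, smul_mul_assoc, one_mul, EE_smul_right, EEm_apply]
    _ = EE e (A * ρ (rb.left i) rr) (rb.right i) C :=
        opR (Coalgebra.Repr.arbitrary k (rb.right i)) (EEm e (A * ρ (rb.left i) rr) C)

include hemul in
lemma midMulEE (hρ1 : ∀ p : PAlg, ρ 1 p = p)
    (hρalg1 : ∀ h : 𝓗, ρ h (1 : PAlg) = counit (R := k) h • (1 : PAlg))
    (P₀ : PAlg) (u b : 𝓗) (Q : PAlg) (ru : Coalgebra.Repr k u (𝓗 × 𝓗)) :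
    EE e P₀ u 1 * EE e 1 b Q =
      ∑ i ∈ ru.index, EE e P₀ (ru.left i * b) (ρ (ru.right i) Q) := by
  set L : 𝓗 ⊗[k] 𝓗 →ₗ[k] HH :=
    e.toLinearMap ∘ₗ TensorProduct.mk k PAlg (𝓗 ⊗[k] PAlg) P₀ ∘ₗ
      TensorProduct.map (LinearMap.mulRight k b) (ρ.flip Q) with hL
  have hLt : ∀ x y : 𝓗, L (x ⊗ₜ[k] y) = EE e P₀ (x * b) (ρ y Q) := by
    intro x y; simp [hL, EE]
  calc EE e P₀ u 1 * EE e 1 b Q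
      = ∑ i ∈ ru.index, εH (ru.left i) • (L ∘ₗ CmH) (ru.right i) := by
        rw [mulEE ρ e hemul P₀ u 1 1 b Q ru (fun i => Coalgebra.Repr.arbitrary k (ru.right i))]
        apply Finset.sum_congr rfl; intro i _
        rw [LinearMap.comp_apply, ← (Coalgebra.Repr.arbitrary k (ru.right i)).eq, map_sum,
          Finset.smul_sum]
        apply Finset.sum_congr rfl; intro j _
        rw [hLt, hρalg1, mul_smul_comm, mul_one, mul_one, EE_smul_left]
    _ = (L ∘ₗ CmH) u := opL ru (L ∘ₗ CmH)
    _ = ∑ i ∈ ru.index, EE e P₀ (ru.left i * b) (ρ (ru.right i) Q) := by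
        rw [LinearMap.comp_apply, ← ru.eq, map_sum]
        exact Finset.sum_congr rfl fun i _ => hLt _ _

end Mul

section TDelta
variable (T : HH →ₗ[k] HH)
variable (hT : ∀ (P Q : PAlg) (h : 𝓗),
      T (e (P ⊗ₜ[k] (h ⊗ₜ[k] Q))) = e (dcpT ρ δ P Q (comul2 h)))

include hT in
lemma TEE (P : PAlg) (h : 𝓗) (Q : PAlg) (r : Coalgebra.Repr k h (𝓗 × 𝓗))
    (s : (i : r.ι) → Coalgebra.Repr k (r.right i) (𝓗 × 𝓗)) :
    T (EE e P h Q) =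
      ∑ i ∈ r.index, ∑ j ∈ (s i).index,
        EE e (ρ (SH ((s i).right j)) Q) (SH ((s i).left j))
          (ρ (twistedAntipode δ (r.left i)) P) := by
  rw [EE, hT, comul2_repr (k := k) h r s, map_sum, eSum]
  apply Finset.sum_congr rfl; intro i _
  rw [map_sum, eSum]
  apply Finset.sum_congr rfl; intro j _
  simp [dcpT, cyc3_tmul, EE]

include hT in
lemma TEE1 (hρalg1 : ∀ h : 𝓗, ρ h (1 : PAlg) = counit (R := k) h • (1 : PAlg))
    (P : PAlg) (a : 𝓗) (ra : Coalgebra.Repr k a (𝓗 × 𝓗)) :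
    T (EE e P a 1) =
      ∑ i ∈ ra.index,
        EE e 1 (SH (ra.right i)) (ρ (twistedAntipode δ (ra.left i)) P) := by
  rw [TEE δ ρ e T hT P a 1 ra (fun i => Coalgebra.Repr.arbitrary k (ra.right i))]
  apply Finset.sum_congr rfl; intro i _
  calc ∑ j ∈ (Coalgebra.Repr.arbitrary k (ra.right i)).index,
        EE e (ρ (SH ((Coalgebra.Repr.arbitrary k (ra.right i)).right j)) 1)
          (SH ((Coalgebra.Repr.arbitrary k (ra.right i)).left j))
          (ρ (twistedAntipode δ (ra.left i)) P)
      = ∑ j ∈ (Coalgebra.Repr.arbitrary k (ra.right i)).index,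
          εH ((Coalgebra.Repr.arbitrary k (ra.right i)).right j) •
            (EEm e 1 (ρ (twistedAntipode δ (ra.left i)) P) ∘ₗ SH)
              ((Coalgebra.Repr.arbitrary k (ra.right i)).left j) := by
        apply Finset.sum_congr rfl; intro j _
        rw [hρalg1, _root_.counit_antipode, EE_smul_left]
        rfl
    _ = (EEm e 1 (ρ (twistedAntipode δ (ra.left i)) P) ∘ₗ SH) (ra.right i) :=
        opR (Coalgebra.Repr.arbitrary k (ra.right i)) _
    _ = EE e 1 (SH (ra.right i)) (ρ (twistedAntipode δ (ra.left i)) P) := rfl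

variable (D : PreBialgebroid k HH PAlg)

lemma DeltaEE (hΔ : ∀ (P Q : PAlg) (h : 𝓗),
      D.π2 (D.Δ (e (P ⊗ₜ[k] (h ⊗ₜ[k] Q)))) = D.π2 (dcpΔ e P Q (comul h)))
    (P Q : PAlg) (h : 𝓗) (r : Coalgebra.Repr k h (𝓗 × 𝓗)) :
    D.π2 (D.Δ (EE e P h Q)) =
      D.π2 (∑ i ∈ r.index, EE e P (r.left i) 1 ⊗ₜ[k] EE e 1 (r.right i) Q) := by
  rw [EE, hΔ]
  congr 1
  rw [← r.eq, map_sum]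
  apply Finset.sum_congr rfl; intro i _
  simp [dcpΔ, EE]


section MA
variable (hemul : ∀ (P₁ P₂ Q₁ Q₂ : PAlg) (h₁ h₂ : 𝓗),
      e (P₁ ⊗ₜ[k] (h₁ ⊗ₜ[k] Q₁)) * e (P₂ ⊗ₜ[k] (h₂ ⊗ₜ[k] Q₂)) =
        e (dcpMul ρ P₁ P₂ Q₁ Q₂ h₂ (comul2 h₁)))
  (hρ1 : ∀ p : PAlg, ρ 1 p = p)
  (hρalg1 : ∀ h : 𝓗, ρ h (1 : PAlg) = counit (R := k) h • (1 : PAlg))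
  (hone : (1 : PAlg) ≠ 0)

include hone in
lemma tmul_one_inj {x y : PAlg} (h : x ⊗ₜ[k] (1 : PAlg) = y ⊗ₜ[k] (1 : PAlg)) : x = y := by
  set ι₀ := LinearMap.toSpanSingleton k PAlg 1 with hι₀
  have hinj : Function.Injective ι₀ := by
    intro c c' hcc
    have : (c - c') • (1 : PAlg) = 0 := by
      rw [sub_smul, sub_eq_zero]
      simpa [hι₀, LinearMap.toSpanSingleton_apply] using hcc
    rcases smul_eq_zero.mp this with h' | h'
    · exact sub_eq_zero.mp h'
    · exact absurd h' hone
  have h2 : LinearMap.lTensor PAlg ι₀ (x ⊗ₜ[k] (1 : k)) =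
      LinearMap.lTensor PAlg ι₀ (y ⊗ₜ[k] (1 : k)) := by
    simpa [hι₀, LinearMap.lTensor_tmul, LinearMap.toSpanSingleton_apply] using h
  have h3 := Module.Flat.lTensor_preserves_injective_linearMap (M := PAlg) ι₀ hinj h2
  have h4 := congrArg (⇑(TensorProduct.rid k PAlg)) h3
  simpa using h4

/-- The bilinear "module algebra" expression `∑ ρ(g⁽¹⁾)(p) ρ(g⁽²⁾)(q)`. -/
def Mg (p q : PAlg) : 𝓗 ⊗[k] 𝓗 →ₗ[k] PAlg :=
  LinearMap.mul' k PAlg ∘ₗ TensorProduct.map (ρ.flip p) (ρ.flip q)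

@[simp] lemma Mg_tmul (p q : PAlg) (x y : 𝓗) :
    Mg ρ p q (x ⊗ₜ[k] y) = ρ x p * ρ y q := by
  simp [Mg, LinearMap.mul'_apply]

include hemul hρ1 hρalg1 hone in
/-- The module-algebra property, derived from associativity of `HH`. -/
lemma moduleAlg (g : 𝓗) (p q : PAlg) : ρ g (p * q) = Mg ρ p q (CmH g) := by
  classical
  set rg := Coalgebra.Repr.arbitrary k g
  set rT := fun i => Coalgebra.Repr.arbitrary k (rg.right i)
  have hAB : EE e p 1 1 * EE e q 1 1 = EE e (p * q) 1 1 := by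
    rw [oneMulEE ρ e hemul hρ1, hρ1, one_mul]
  have h1 : EE e 1 g 1 * (EE e p 1 1 * EE e q 1 1) =
      ∑ i ∈ rg.index, EE e (ρ (rg.left i) (p * q)) (rg.right i) 1 := by
    rw [hAB, mulAlphaEE ρ e hemul hρalg1 1 g 1 (p * q) rg]
    exact Finset.sum_congr rfl fun i _ => by rw [one_mul]
  have h2 : (EE e 1 g 1 * EE e p 1 1) * EE e q 1 1 =
      ∑ i ∈ rg.index, ∑ j ∈ (rT i).index,
        EE e (ρ (rg.left i) p * ρ ((rT i).left j) q) ((rT i).right j) 1 := by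
    rw [mulAlphaEE ρ e hemul hρalg1 1 g 1 p rg, Finset.sum_mul]
    apply Finset.sum_congr rfl; intro i _
    rw [mulAlphaEE ρ e hemul hρalg1 _ _ 1 q (rT i), one_mul]
  have h3 : ∑ i ∈ rg.index, EE e (ρ (rg.left i) (p * q)) (rg.right i) 1 =
      ∑ i ∈ rg.index, ∑ j ∈ (rT i).index,
        EE e (ρ (rg.left i) p * ρ ((rT i).left j) q) ((rT i).right j) 1 := by
    rw [← h1, ← h2, mul_assoc]
  -- strip `e`
  have h4 : ∑ i ∈ rg.index, (ρ (rg.left i) (p * q)) ⊗ₜ[k] ((rg.right i) ⊗ₜ[k] (1 : PAlg)) =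
      ∑ i ∈ rg.index, ∑ j ∈ (rT i).index,
        (ρ (rg.left i) p * ρ ((rT i).left j) q) ⊗ₜ[k] (((rT i).right j) ⊗ₜ[k] (1 : PAlg)) := by
    apply e.injective
    rw [eSum, eSum]
    simpa only [EE, eSum] using h3
  -- collapse the middle leg with the counit
  set κ : PAlg ⊗[k] (𝓗 ⊗[k] PAlg) →ₗ[k] PAlg ⊗[k] PAlg :=
    TensorProduct.map LinearMap.id
      ((TensorProduct.lid k PAlg).toLinearMap ∘ₗ
        TensorProduct.map (Coalgebra.counit (R := k)) LinearMap.id) with hκ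
  have hκt : ∀ (x : PAlg) (u : 𝓗) (v : PAlg),
      κ (x ⊗ₜ[k] (u ⊗ₜ[k] v)) = εH u • (x ⊗ₜ[k] v) := by
    intro x u v; simp [hκ, TensorProduct.tmul_smul, TensorProduct.smul_tmul']
  have h5 := congrArg (⇑κ) h4
  simp only [map_sum] at h5
  have h6 : (ρ g (p * q)) ⊗ₜ[k] (1 : PAlg) =
      (∑ i ∈ rg.index, ρ (rg.left i) p * ρ (rg.right i) q) ⊗ₜ[k] (1 : PAlg) := by
    have hL : ∑ i ∈ rg.index, κ ((ρ (rg.left i) (p * q)) ⊗ₜ[k] ((rg.right i) ⊗ₜ[k] (1 : PAlg)))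
        = (ρ g (p * q)) ⊗ₜ[k] (1 : PAlg) := by
      calc ∑ i ∈ rg.index, κ ((ρ (rg.left i) (p * q)) ⊗ₜ[k] ((rg.right i) ⊗ₜ[k] (1 : PAlg)))
          = ∑ i ∈ rg.index, εH (rg.right i) •
              (((TensorProduct.mk k PAlg PAlg).flip 1 ∘ₗ ρ.flip (p * q)) (rg.left i)) := by
            apply Finset.sum_congr rfl; intro i _
            rw [hκt]
            simp [TensorProduct.smul_tmul']
        _ = _ := by rw [opR rg ((TensorProduct.mk k PAlg PAlg).flip 1 ∘ₗ ρ.flip (p * q))]; rfl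
    have hR : ∑ i ∈ rg.index, ∑ j ∈ (rT i).index,
        κ ((ρ (rg.left i) p * ρ ((rT i).left j) q) ⊗ₜ[k] (((rT i).right j) ⊗ₜ[k] (1 : PAlg)))
        = (∑ i ∈ rg.index, ρ (rg.left i) p * ρ (rg.right i) q) ⊗ₜ[k] (1 : PAlg) := by
      rw [TensorProduct.sum_tmul]
      apply Finset.sum_congr rfl; intro i _
      calc ∑ j ∈ (rT i).index,
            κ ((ρ (rg.left i) p * ρ ((rT i).left j) q) ⊗ₜ[k] (((rT i).right j) ⊗ₜ[k] (1 : PAlg)))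
          = ∑ j ∈ (rT i).index, εH ((rT i).right j) •
              (((TensorProduct.mk k PAlg PAlg).flip 1 ∘ₗ
                LinearMap.mulLeft k (ρ (rg.left i) p) ∘ₗ ρ.flip q) ((rT i).left j)) := by
            apply Finset.sum_congr rfl; intro j _
            rw [hκt]
            simp [TensorProduct.smul_tmul']
        _ = _ := by
            rw [opR (rT i) ((TensorProduct.mk k PAlg PAlg).flip 1 ∘ₗ
              LinearMap.mulLeft k (ρ (rg.left i) p) ∘ₗ ρ.flip q)]
            rfl
    rw [← hL, ← hR]
    exact h5
  have h7 := tmul_one_inj hone h6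
  rw [h7, ← rg.eq, map_sum]
  exact Finset.sum_congr rfl fun i _ => (Mg_tmul ρ p q _ _).symm

include hemul hρ1 hρalg1 hone in
lemma moduleAlgRepr {u : 𝓗} (ru : Coalgebra.Repr k u (𝓗 × 𝓗)) (p q : PAlg) :
    ρ u (p * q) = ∑ i ∈ ru.index, ρ (ru.left i) p * ρ (ru.right i) q := by
  rw [moduleAlg ρ e hemul hρ1 hρalg1 hone u p q, ← ru.eq, map_sum]
  exact Finset.sum_congr rfl fun i _ => Mg_tmul ρ p q _ _

end MA

end TDelta

section Key
variable (hemul : ∀ (P₁ P₂ Q₁ Q₂ : PAlg) (h₁ h₂ : 𝓗),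
      e (P₁ ⊗ₜ[k] (h₁ ⊗ₜ[k] Q₁)) * e (P₂ ⊗ₜ[k] (h₂ ⊗ₜ[k] Q₂)) =
        e (dcpMul ρ P₁ P₂ Q₁ Q₂ h₂ (comul2 h₁)))
  (hρ1 : ∀ p : PAlg, ρ 1 p = p)
  (hρalg1 : ∀ h : 𝓗, ρ h (1 : PAlg) = counit (R := k) h • (1 : PAlg))
  (hone : (1 : PAlg) ≠ 0)
  (T : HH →ₗ[k] HH)
  (hT : ∀ (P Q : PAlg) (h : 𝓗),
      T (e (P ⊗ₜ[k] (h ⊗ₜ[k] Q))) = e (dcpT ρ δ P Q (comul2 h)))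
  (D : PreBialgebroid k HH PAlg)
  (hα : ∀ P : PAlg, D.α P = e (P ⊗ₜ[k] ((1 : 𝓗) ⊗ₜ[k] (1 : PAlg))))
  (hβ : ∀ Q : PAlg, D.β Q = e ((1 : PAlg) ⊗ₜ[k] ((1 : 𝓗) ⊗ₜ[k] Q)))
  (hΔ : ∀ (P Q : PAlg) (h : 𝓗),
      D.π2 (D.Δ (e (P ⊗ₜ[k] (h ⊗ₜ[k] Q)))) = D.π2 (dcpΔ e P Q (comul h)))

lemma eInduction (p : HH → Prop) (h0 : p 0) (hadd : ∀ x y, p x → p y → p (x + y))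
    (hp : ∀ P h Q, p (EE e P h Q)) (x : HH) : p x := by
  have key : ∀ w, p (e w) := by
    intro w
    induction w using TensorProduct.induction_on with
    | zero => rw [show e 0 = 0 from map_zero e.toLinearMap]; exact h0
    | add u v hu hv =>
      rw [show e (u + v) = e u + e v from map_add e.toLinearMap u v]
      exact hadd _ _ hu hv
    | tmul a b =>
      induction b using TensorProduct.induction_on with
      | zero =>
        rw [TensorProduct.tmul_zero, show e 0 = 0 from map_zero e.toLinearMap]; exact h0
      | add u v hu hv =>
        rw [TensorProduct.tmul_add,
          show e (a ⊗ₜ[k] u + a ⊗ₜ[k] v) = e (a ⊗ₜ[k] u) + e (a ⊗ₜ[k] v) from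
            map_add e.toLinearMap _ _]
        exact hadd _ _ hu hv
      | tmul h Q => exact hp a h Q
  have := key (e.symm x)
  rwa [e.apply_symm_apply] at this

include hemul hρ1 hρalg1 hone hT hα hβ in
lemma keyA (rr : PAlg) (x : HH) : T (D.β rr * x) = T x * D.α rr := by
  induction x using eInduction e with
  | h0 => simp
  | hadd u v hu hv => rw [mul_add, map_add, map_add, add_mul, hu, hv]
  | hp P' g Q' =>
    rw [hβ, hα]
    set rg := Coalgebra.Repr.arbitrary k g
    set rs := fun i => Coalgebra.Repr.arbitrary k (rg.right i)
    have h1 : (e ((1 : PAlg) ⊗ₜ[k] ((1 : 𝓗) ⊗ₜ[k] rr))) * EE e P' g Q'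
        = EE e P' g (Q' * rr) := by
      have h2 := oneMulEE ρ e hemul hρ1 1 rr P' g Q'
      rw [hρ1, one_mul] at h2
      exact h2
    rw [h1]
    show T (EE e P' g (Q' * rr)) = T (EE e P' g Q') * EE e rr 1 1
    rw [TEE δ ρ e T hT P' g (Q' * rr) rg rs, TEE δ ρ e T hT P' g Q' rg rs]
    rw [Finset.sum_mul]
    apply Finset.sum_congr rfl; intro i _
    -- the gadget
    set C₀ := ρ (twistedAntipode δ (rg.left i)) P' with hC₀
    set ζ : 𝓗 ⊗[k] 𝓗 →ₗ[k] PAlg :=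
      LinearMap.mul' k PAlg ∘ₗ
        TensorProduct.map (ρ.flip Q' ∘ₗ SH) (ρ.flip rr ∘ₗ SH) ∘ₗ
        (TensorProduct.comm k 𝓗 𝓗).toLinearMap with hζ
    set ξ : 𝓗 →ₗ[k] 𝓗 ⊗[k] PAlg := (TensorProduct.mk k 𝓗 PAlg).flip C₀ ∘ₗ SH with hξ
    set Φ : 𝓗 ⊗[k] (𝓗 ⊗[k] 𝓗) →ₗ[k] HH :=
      e.toLinearMap ∘ₗ TensorProduct.map ζ ξ ∘ₗ
        (TensorProduct.comm k 𝓗 (𝓗 ⊗[k] 𝓗)).toLinearMap with hΦ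
    have hΦt : ∀ x u v : 𝓗,
        Φ (x ⊗ₜ[k] (u ⊗ₜ[k] v)) = EE e (ρ (SH v) Q' * ρ (SH u) rr) (SH x) C₀ := by
      intro x u v
      simp [hΦ, hζ, hξ, EE, LinearMap.mul'_apply]
    calc ∑ j ∈ (rs i).index,
          EE e (ρ (SH ((rs i).right j)) (Q' * rr)) (SH ((rs i).left j)) C₀
        = ∑ j ∈ (rs i).index, ∑ m ∈ (Coalgebra.Repr.arbitrary k ((rs i).right j)).index,
            Φ ((rs i).left j ⊗ₜ[k]
              ((Coalgebra.Repr.arbitrary k ((rs i).right j)).left m ⊗ₜ[k]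
               (Coalgebra.Repr.arbitrary k ((rs i).right j)).right m)) := by
          apply Finset.sum_congr rfl; intro j _
          rw [moduleAlgRepr ρ e hemul hρ1 hρalg1 hone
            (antipodeRepr (Coalgebra.Repr.arbitrary k ((rs i).right j))) Q' rr]
          rw [show ∀ z : PAlg, EE e z (SH ((rs i).left j)) C₀
              = (e.toLinearMap ∘ₗ (TensorProduct.mk k PAlg (𝓗 ⊗[k] PAlg)).flip
                  ((SH ((rs i).left j)) ⊗ₜ[k] C₀)) z from fun z => rfl, map_sum]
          apply Finset.sum_congr rfl; intro m _
          rw [hΦt]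
          rfl
      _ = ∑ j ∈ (rs i).index, ∑ m ∈ (Coalgebra.Repr.arbitrary k ((rs i).left j)).index,
            Φ ((Coalgebra.Repr.arbitrary k ((rs i).left j)).left m ⊗ₜ[k]
              ((Coalgebra.Repr.arbitrary k ((rs i).left j)).right m ⊗ₜ[k] (rs i).right j)) :=
          (hco Φ (rs i) _ _).symm
      _ = ∑ j ∈ (rs i).index,
            EE e (ρ (SH ((rs i).right j)) Q') (SH ((rs i).left j)) C₀ *
              e (rr ⊗ₜ[k] ((1 : 𝓗) ⊗ₜ[k] (1 : PAlg))) := by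
          apply Finset.sum_congr rfl; intro j _
          have hma := mulAlphaEE ρ e hemul hρalg1
            (ρ (SH ((rs i).right j)) Q') (SH ((rs i).left j)) C₀ rr
            (antipodeRepr (Coalgebra.Repr.arbitrary k ((rs i).left j)))
          rw [show e (rr ⊗ₜ[k] ((1:𝓗) ⊗ₜ[k] (1:PAlg))) = EE e rr 1 1 from rfl, hma]
          apply Finset.sum_congr rfl; intro m _
          rw [hΦt]
          rfl
      _ = (∑ j ∈ (rs i).index,
            EE e (ρ (SH ((rs i).right j)) Q') (SH ((rs i).left j)) C₀) * EE e rr 1 1 :=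
          (Finset.sum_mul _ _ _).symm

include hemul hρalg1 hα hΔ in
lemma keyB (rr : PAlg) (y : HH) (u : HH) :
    D.π2 (D.Δ (u * D.α rr) * (y ⊗ₜ[k] (1 : HH))) =
      D.π2 (D.Δ u * ((D.α rr * y) ⊗ₜ[k] (1 : HH))) := by
  induction u using eInduction e with
  | h0 => simp
  | hadd u v hu hv =>
    rw [add_mul, map_add, add_mul, map_add, map_add, add_mul, map_add, hu, hv]
  | hp A b C =>
    rw [hα]
    set rb := Coalgebra.Repr.arbitrary k b with hrb
    -- gadget
    set χ : 𝓗 ⊗[k] 𝓗 →ₗ[k] HH :=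
      LinearMap.mulRight k y ∘ₗ e.toLinearMap ∘ₗ
        TensorProduct.map (LinearMap.mulLeft k A ∘ₗ ρ.flip rr)
          ((TensorProduct.mk k 𝓗 PAlg).flip 1) with hχ
    set Φ : 𝓗 ⊗[k] (𝓗 ⊗[k] 𝓗) →ₗ[k] HH ⊗[k] HH :=
      TensorProduct.map χ (EEm e 1 C) ∘ₗ (TensorProduct.assoc k 𝓗 𝓗 𝓗).symm.toLinearMap
        with hΦ
    have hΦt : ∀ x u' v : 𝓗,
        Φ (x ⊗ₜ[k] (u' ⊗ₜ[k] v)) =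
          (EE e (A * ρ x rr) u' 1 * y) ⊗ₜ[k] EE e 1 v C := by
      intro x u' v
      simp [hΦ, hχ, EE]
    -- left side
    have hL : D.π2 (D.Δ (EE e A b C * e (rr ⊗ₜ[k] ((1 : 𝓗) ⊗ₜ[k] (1 : PAlg))))
          * (y ⊗ₜ[k] (1 : HH)))
        = D.π2 (∑ i ∈ rb.index, ∑ j ∈ (Coalgebra.Repr.arbitrary k (rb.right i)).index,
            Φ (rb.left i ⊗ₜ[k]
              ((Coalgebra.Repr.arbitrary k (rb.right i)).left j ⊗ₜ[k]
               (Coalgebra.Repr.arbitrary k (rb.right i)).right j))) := by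
      rw [show e (rr ⊗ₜ[k] ((1:𝓗) ⊗ₜ[k] (1:PAlg))) = EE e rr 1 1 from rfl,
        mulAlphaEE ρ e hemul hρalg1 A b C rr rb]
      have step : D.π2 (D.Δ (∑ i ∈ rb.index, EE e (A * ρ (rb.left i) rr) (rb.right i) C))
          = D.π2 (∑ i ∈ rb.index, ∑ j ∈ (Coalgebra.Repr.arbitrary k (rb.right i)).index,
              EE e (A * ρ (rb.left i) rr)
                ((Coalgebra.Repr.arbitrary k (rb.right i)).left j) 1 ⊗ₜ[k]
              EE e 1 ((Coalgebra.Repr.arbitrary k (rb.right i)).right j) C) := by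
        rw [map_sum, map_sum, map_sum]
        apply Finset.sum_congr rfl; intro i _
        rw [DeltaEE e D hΔ (A * ρ (rb.left i) rr) C (rb.right i)
          (Coalgebra.Repr.arbitrary k (rb.right i)), map_sum]
      rw [pi2_mul_congr D step (y ⊗ₜ[k] (1 : HH))]
      congr 1
      rw [Finset.sum_mul]
      apply Finset.sum_congr rfl; intro i _
      rw [Finset.sum_mul]
      apply Finset.sum_congr rfl; intro j _
      rw [hΦt, Algebra.TensorProduct.tmul_mul_tmul, mul_one]
    -- right side
    have hR : D.π2 (D.Δ (EE e A b C) * ((e (rr ⊗ₜ[k] ((1 : 𝓗) ⊗ₜ[k] (1 : PAlg))) * y)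
          ⊗ₜ[k] (1 : HH)))
        = D.π2 (∑ i ∈ rb.index, ∑ j ∈ (Coalgebra.Repr.arbitrary k (rb.left i)).index,
            Φ ((Coalgebra.Repr.arbitrary k (rb.left i)).left j ⊗ₜ[k]
              ((Coalgebra.Repr.arbitrary k (rb.left i)).right j ⊗ₜ[k] rb.right i))) := by
      have step := DeltaEE e D hΔ A C b rb
      rw [pi2_mul_congr D step
        ((e (rr ⊗ₜ[k] ((1 : 𝓗) ⊗ₜ[k] (1 : PAlg))) * y) ⊗ₜ[k] (1 : HH))]
      congr 1
      rw [Finset.sum_mul]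
      apply Finset.sum_congr rfl; intro i _
      rw [Algebra.TensorProduct.tmul_mul_tmul, mul_one, ← mul_assoc,
        show e (rr ⊗ₜ[k] ((1:𝓗) ⊗ₜ[k] (1:PAlg))) = EE e rr 1 1 from rfl,
        mulAlphaEE ρ e hemul hρalg1 A (rb.left i) 1 rr
          (Coalgebra.Repr.arbitrary k (rb.left i)),
        Finset.sum_mul, TensorProduct.sum_tmul]
      apply Finset.sum_congr rfl; intro j _
      rw [hΦt]
    rw [hL, hR]
    congr 1
    exact (hco Φ rb _ _).symm

include hemul hρ1 hρalg1 hone hT hα hβ hΔ in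
lemma descent {z : HH ⊗[k] HH} (hz : z ∈ D.rel2) :
    D.π2 (PreBialgebroid.tau2 D T z) = 0 := by
  induction hz using Submodule.span_induction with
  | mem x hx =>
    obtain ⟨r, x₀, y₀, rfl⟩ := hx
    rw [map_sub]
    have ht : ∀ (a b : HH), PreBialgebroid.tau2 D T (a ⊗ₜ[k] b)
        = D.Δ (T a) * (b ⊗ₜ[k] (1 : HH)) := by
      intro a b; simp [PreBialgebroid.tau2]
    rw [ht, ht]
    rw [keyA δ ρ e hemul hρ1 hρalg1 hone T hT D hα hβ r x₀]
    rw [map_sub]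
    rw [keyB ρ e hemul hρalg1 D hα hΔ r y₀ (T x₀)]
    exact sub_self _
  | zero => simp
  | add u v _ _ hu hv => rw [map_add, map_add, hu, hv, add_zero]
  | smul c u _ hu => rw [map_smul, map_smul, hu, smul_zero]

section StepG
variable (P Q : PAlg)

/-- third-slot linear version of `EE`. -/
def EEr (P₀ : PAlg) (h : 𝓗) : PAlg →ₗ[k] HH :=
  e.toLinearMap ∘ₗ TensorProduct.mk k PAlg (𝓗 ⊗[k] PAlg) P₀ ∘ₗ TensorProduct.mk k 𝓗 PAlg h

@[simp] lemma EEr_apply (P₀ : PAlg) (h : 𝓗) (x : PAlg) : EEr e P₀ h x = EE e P₀ h x := rfl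

/-- `(c ⊗ d) ⊗ w ↦ EE 1 (S d * w) (ρ (S c) Q)`. -/
def inn2 : (𝓗 ⊗[k] 𝓗) ⊗[k] 𝓗 →ₗ[k] HH :=
  e.toLinearMap ∘ₗ TensorProduct.mk k PAlg (𝓗 ⊗[k] PAlg) 1 ∘ₗ
    TensorProduct.map (LinearMap.mul' k 𝓗 ∘ₗ LinearMap.rTensor 𝓗 SH) (ρ.flip Q ∘ₗ SH) ∘ₗ
    (TensorProduct.comm k 𝓗 (𝓗 ⊗[k] 𝓗)).toLinearMap ∘ₗ
    (TensorProduct.assoc k 𝓗 𝓗 𝓗).toLinearMap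

@[simp] lemma inn2_tmul (c d w : 𝓗) :
    inn2 ρ e Q ((c ⊗ₜ[k] d) ⊗ₜ[k] w) = EE e 1 (SH d * w) (ρ (SH c) Q) := by
  simp [inn2, EE, LinearMap.mul'_apply]

/-- `(c ⊗ d) ⊗ w` with `c` comultiplied. -/
def fir : 𝓗 ⊗[k] 𝓗 →ₗ[k] HH := inn2 ρ e Q ∘ₗ LinearMap.rTensor 𝓗 CmH

lemma fir_tmul (v w : 𝓗) (rv : Coalgebra.Repr k v (𝓗 × 𝓗)) :
    fir ρ e Q (v ⊗ₜ[k] w) =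
      ∑ n ∈ rv.index, EE e 1 (SH (rv.right n) * w) (ρ (SH (rv.left n)) Q) := by
  rw [fir, LinearMap.comp_apply, LinearMap.rTensor_tmul, ← rv.eq, TensorProduct.sum_tmul,
    map_sum]
  exact Finset.sum_congr rfl fun n _ => inn2_tmul ρ e Q _ _ _

/-- `b ⊗ x ↦ EE 1 (S b) (ρ (S̃ x) P)`. -/
def ww : 𝓗 ⊗[k] 𝓗 →ₗ[k] HH :=
  e.toLinearMap ∘ₗ TensorProduct.mk k PAlg (𝓗 ⊗[k] PAlg) 1 ∘ₗ
    TensorProduct.map SH (ρ.flip P ∘ₗ twistedAntipode δ)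

@[simp] lemma ww_tmul (b x : 𝓗) :
    ww δ ρ e P (b ⊗ₜ[k] x) = EE e 1 (SH b) (ρ (twistedAntipode δ x) P) := by
  simp [ww, EE]

/-- shuffle `x ⊗ ((b ⊗ c) ⊗ z) ↦ (c ⊗ z) ⊗ (b ⊗ x)`. -/
def shuf : 𝓗 ⊗[k] ((𝓗 ⊗[k] 𝓗) ⊗[k] 𝓗) →ₗ[k] (𝓗 ⊗[k] 𝓗) ⊗[k] (𝓗 ⊗[k] 𝓗) :=
  LinearMap.lTensor (𝓗 ⊗[k] 𝓗) (TensorProduct.comm k 𝓗 𝓗).toLinearMap ∘ₗ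
  (TensorProduct.assoc k (𝓗 ⊗[k] 𝓗) 𝓗 𝓗).toLinearMap ∘ₗ
  (TensorProduct.comm k 𝓗 ((𝓗 ⊗[k] 𝓗) ⊗[k] 𝓗)).toLinearMap ∘ₗ
  (TensorProduct.assoc k 𝓗 (𝓗 ⊗[k] 𝓗) 𝓗).toLinearMap ∘ₗ
  LinearMap.rTensor 𝓗 (TensorProduct.assoc k 𝓗 𝓗 𝓗).toLinearMap ∘ₗ
  (TensorProduct.comm k 𝓗 ((𝓗 ⊗[k] 𝓗) ⊗[k] 𝓗)).toLinearMap

@[simp] lemma shuf_tmul (x b c z : 𝓗) :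
    shuf (k := k) (𝓗 := 𝓗) (x ⊗ₜ[k] ((b ⊗ₜ[k] c) ⊗ₜ[k] z)) =
      (c ⊗ₜ[k] z) ⊗ₜ[k] (b ⊗ₜ[k] x) := by
  simp [shuf]

/-- the gadget `Φ₀`. -/
def Phi0 : 𝓗 ⊗[k] (𝓗 ⊗[k] 𝓗) →ₗ[k] HH ⊗[k] HH :=
  TensorProduct.map (fir ρ e Q) (ww δ ρ e P) ∘ₗ shuf ∘ₗ
    LinearMap.lTensor 𝓗 (LinearMap.rTensor 𝓗 (CmH))

lemma Phi0_tmul (x y z : 𝓗) (ry : Coalgebra.Repr k y (𝓗 × 𝓗))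
    (rn : (m : ry.ι) → Coalgebra.Repr k (ry.right m) (𝓗 × 𝓗)) :
    Phi0 δ ρ e P Q (x ⊗ₜ[k] (y ⊗ₜ[k] z)) =
      ∑ m ∈ ry.index, ∑ n ∈ (rn m).index,
        EE e 1 (SH ((rn m).right n) * z) (ρ (SH ((rn m).left n)) Q) ⊗ₜ[k]
          EE e 1 (SH (ry.left m)) (ρ (twistedAntipode δ x) P) := by
  rw [Phi0, LinearMap.comp_apply, LinearMap.comp_apply, LinearMap.lTensor_tmul,
    LinearMap.rTensor_tmul, ← ry.eq, TensorProduct.sum_tmul, TensorProduct.tmul_sum,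
    map_sum, map_sum]
  apply Finset.sum_congr rfl; intro m _
  rw [shuf_tmul, TensorProduct.map_tmul, ww_tmul, fir_tmul ρ e Q _ _ (rn m),
    TensorProduct.sum_tmul]

/-- the gadget `Φ₁` (parametrised by the third slot of the second factor). -/
def Phi1 (C₀ : PAlg) : 𝓗 ⊗[k] (𝓗 ⊗[k] 𝓗) →ₗ[k] HH ⊗[k] HH :=
  TensorProduct.map (fir ρ e Q) (EEm e 1 C₀ ∘ₗ SH) ∘ₗ
    (TensorProduct.comm k 𝓗 (𝓗 ⊗[k] 𝓗)).toLinearMap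

lemma Phi1_tmul (C₀ : PAlg) (x v w : 𝓗) (rv : Coalgebra.Repr k v (𝓗 × 𝓗)) :
    Phi1 ρ e Q C₀ (x ⊗ₜ[k] (v ⊗ₜ[k] w)) =
      ∑ n ∈ rv.index,
        EE e 1 (SH (rv.right n) * w) (ρ (SH (rv.left n)) Q) ⊗ₜ[k]
          EE e 1 (SH x) C₀ := by
  rw [Phi1, LinearMap.comp_apply]
  simp only [LinearEquiv.coe_coe, TensorProduct.comm_tmul, TensorProduct.map_tmul]
  rw [fir_tmul ρ e Q _ _ rv, TensorProduct.sum_tmul]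
  rfl

/-- the gadget `Φ₂` (with constant second factor). -/
def Phi2 (K : HH) : 𝓗 ⊗[k] (𝓗 ⊗[k] 𝓗) →ₗ[k] HH ⊗[k] HH :=
  (TensorProduct.mk k HH HH).flip K ∘ₗ
    e.toLinearMap ∘ₗ TensorProduct.mk k PAlg (𝓗 ⊗[k] PAlg) 1 ∘ₗ
    TensorProduct.map (LinearMap.mul' k 𝓗 ∘ₗ LinearMap.rTensor 𝓗 SH) (ρ.flip Q ∘ₗ SH) ∘ₗ
    (TensorProduct.comm k 𝓗 (𝓗 ⊗[k] 𝓗)).toLinearMap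

@[simp] lemma Phi2_tmul (K : HH) (c d w : 𝓗) :
    Phi2 ρ e Q K (c ⊗ₜ[k] (d ⊗ₜ[k] w)) =
      EE e 1 (SH d * w) (ρ (SH c) Q) ⊗ₜ[k] K := by
  simp [Phi2, EE, LinearMap.mul'_apply]

include hemul hρ1 hρalg1 hT hα hβ hΔ in
set_option maxHeartbeats 2000000 in
lemma stepG (h : 𝓗) :
    D.π2 (PreBialgebroid.tau2 D T (dcpΔ e P Q (CmH h))) =
      D.π2 ((1 : HH) ⊗ₜ[k] T (EE e P h Q)) := by
  classical
  set r0 := Coalgebra.Repr.arbitrary k h with hr0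
  set rA := fun i => Coalgebra.Repr.arbitrary k (r0.left i) with hrA
  set rY := fun i => Coalgebra.Repr.arbitrary k (r0.right i) with hrY
  have h0 : PreBialgebroid.tau2 D T (dcpΔ e P Q (CmH h)) =
      ∑ i ∈ r0.index, D.Δ (T (EE e P (r0.left i) 1)) *
        (EE e 1 (r0.right i) Q ⊗ₜ[k] (1 : HH)) := by
    rw [← r0.eq, map_sum, map_sum]
    apply Finset.sum_congr rfl; intro i _
    rw [show dcpΔ e P Q (r0.left i ⊗ₜ[k] r0.right i)
        = EE e P (r0.left i) 1 ⊗ₜ[k] EE e 1 (r0.right i) Q by simp [dcpΔ, EE]]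
    simp [PreBialgebroid.tau2]
  have h1 : ∀ i, D.π2 (D.Δ (T (EE e P (r0.left i) 1)) *
        (EE e 1 (r0.right i) Q ⊗ₜ[k] (1 : HH)))
      = D.π2 (∑ j ∈ (rA i).index,
          Phi0 δ ρ e P Q ((rA i).left j ⊗ₜ[k] ((rA i).right j ⊗ₜ[k] r0.right i))) := by
    intro i
    rw [TEE1 δ ρ e T hT hρalg1 P (r0.left i) (rA i)]
    have hDT : D.π2 (D.Δ (∑ j ∈ (rA i).index,
        EE e 1 (SH ((rA i).right j)) (ρ (twistedAntipode δ ((rA i).left j)) P)))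
        = D.π2 (∑ j ∈ (rA i).index,
            ∑ m ∈ (Coalgebra.Repr.arbitrary k ((rA i).right j)).index,
            EE e 1 (SH ((Coalgebra.Repr.arbitrary k ((rA i).right j)).right m)) 1 ⊗ₜ[k]
            EE e 1 (SH ((Coalgebra.Repr.arbitrary k ((rA i).right j)).left m))
              (ρ (twistedAntipode δ ((rA i).left j)) P)) := by
      rw [map_sum, map_sum, map_sum]
      apply Finset.sum_congr rfl; intro j _
      rw [DeltaEE e D hΔ 1 (ρ (twistedAntipode δ ((rA i).left j)) P)
        (SH ((rA i).right j)) (antipodeRepr (Coalgebra.Repr.arbitrary k ((rA i).right j)))]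
      simp only [antipodeRepr_index, antipodeRepr_left, antipodeRepr_right]
    rw [pi2_mul_congr D hDT (EE e 1 (r0.right i) Q ⊗ₜ[k] (1 : HH))]
    congr 1
    rw [Finset.sum_mul]
    apply Finset.sum_congr rfl; intro j _
    rw [Phi0_tmul δ ρ e P Q _ _ _ (Coalgebra.Repr.arbitrary k ((rA i).right j))
        (fun m => Coalgebra.Repr.arbitrary k
          ((Coalgebra.Repr.arbitrary k ((rA i).right j)).right m)),
      Finset.sum_mul]
    apply Finset.sum_congr rfl; intro m _
    rw [Algebra.TensorProduct.tmul_mul_tmul, mul_one,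
      midMulEE ρ e hemul hρ1 hρalg1 1 _ (r0.right i) Q
        (antipodeRepr (Coalgebra.Repr.arbitrary k
          ((Coalgebra.Repr.arbitrary k ((rA i).right j)).right m))),
      TensorProduct.sum_tmul]
    simp only [antipodeRepr_index, antipodeRepr_left, antipodeRepr_right]
  -- the big regrouping chain (element level)
  have h2 : ∑ i ∈ r0.index, ∑ j ∈ (rA i).index,
        Phi0 δ ρ e P Q ((rA i).left j ⊗ₜ[k] ((rA i).right j ⊗ₜ[k] r0.right i))
      = ∑ i ∈ r0.index, ∑ j ∈ (rY i).index,
        Phi0 δ ρ e P Q (r0.left i ⊗ₜ[k] ((rY i).left j ⊗ₜ[k] (rY i).right j)) :=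
    hco (Phi0 δ ρ e P Q) r0 rA rY
  have h3 : ∀ i, ∑ j ∈ (rY i).index,
        Phi0 δ ρ e P Q (r0.left i ⊗ₜ[k] ((rY i).left j ⊗ₜ[k] (rY i).right j))
      = ∑ j ∈ (rY i).index,
          ∑ m ∈ (Coalgebra.Repr.arbitrary k ((rY i).right j)).index,
          Phi1 ρ e Q (ρ (twistedAntipode δ (r0.left i)) P)
            ((rY i).left j ⊗ₜ[k]
              ((Coalgebra.Repr.arbitrary k ((rY i).right j)).left m ⊗ₜ[k]
               (Coalgebra.Repr.arbitrary k ((rY i).right j)).right m)) := by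
    intro i
    calc ∑ j ∈ (rY i).index,
          Phi0 δ ρ e P Q (r0.left i ⊗ₜ[k] ((rY i).left j ⊗ₜ[k] (rY i).right j))
        = ∑ j ∈ (rY i).index,
            ∑ m ∈ (Coalgebra.Repr.arbitrary k ((rY i).left j)).index,
            Phi1 ρ e Q (ρ (twistedAntipode δ (r0.left i)) P)
              ((Coalgebra.Repr.arbitrary k ((rY i).left j)).left m ⊗ₜ[k]
                ((Coalgebra.Repr.arbitrary k ((rY i).left j)).right m ⊗ₜ[k] (rY i).right j)) := by
          apply Finset.sum_congr rfl; intro j _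
          rw [Phi0_tmul δ ρ e P Q _ _ _ (Coalgebra.Repr.arbitrary k ((rY i).left j))
            (fun m => Coalgebra.Repr.arbitrary k
              ((Coalgebra.Repr.arbitrary k ((rY i).left j)).right m))]
          apply Finset.sum_congr rfl; intro m _
          rw [Phi1_tmul ρ e Q _ _ _ _ (Coalgebra.Repr.arbitrary k
            ((Coalgebra.Repr.arbitrary k ((rY i).left j)).right m))]
      _ = _ := hco (Phi1 ρ e Q (ρ (twistedAntipode δ (r0.left i)) P)) (rY i) _ _
  have h4 : ∀ i, ∀ j, ∑ m ∈ (Coalgebra.Repr.arbitrary k ((rY i).right j)).index,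
        Phi1 ρ e Q (ρ (twistedAntipode δ (r0.left i)) P)
          ((rY i).left j ⊗ₜ[k]
            ((Coalgebra.Repr.arbitrary k ((rY i).right j)).left m ⊗ₜ[k]
             (Coalgebra.Repr.arbitrary k ((rY i).right j)).right m))
      = EE e 1 1 (ρ (SH ((rY i).right j)) Q) ⊗ₜ[k]
          EE e 1 (SH ((rY i).left j)) (ρ (twistedAntipode δ (r0.left i)) P) := by
    intro i j
    set K := EE e 1 (SH ((rY i).left j)) (ρ (twistedAntipode δ (r0.left i)) P) with hK
    set rZ := Coalgebra.Repr.arbitrary k ((rY i).right j) with hrZ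
    calc ∑ m ∈ rZ.index,
          Phi1 ρ e Q (ρ (twistedAntipode δ (r0.left i)) P)
            ((rY i).left j ⊗ₜ[k] (rZ.left m ⊗ₜ[k] rZ.right m))
        = ∑ m ∈ rZ.index, ∑ n ∈ (Coalgebra.Repr.arbitrary k (rZ.left m)).index,
            Phi2 ρ e Q K
              ((Coalgebra.Repr.arbitrary k (rZ.left m)).left n ⊗ₜ[k]
                ((Coalgebra.Repr.arbitrary k (rZ.left m)).right n ⊗ₜ[k] rZ.right m)) := by
          apply Finset.sum_congr rfl; intro m _
          rw [Phi1_tmul ρ e Q _ _ _ _ (Coalgebra.Repr.arbitrary k (rZ.left m))]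
          apply Finset.sum_congr rfl; intro n _
          rw [Phi2_tmul]
      _ = ∑ m ∈ rZ.index, ∑ n ∈ (Coalgebra.Repr.arbitrary k (rZ.right m)).index,
            Phi2 ρ e Q K
              (rZ.left m ⊗ₜ[k]
                ((Coalgebra.Repr.arbitrary k (rZ.right m)).left n ⊗ₜ[k]
                 (Coalgebra.Repr.arbitrary k (rZ.right m)).right n)) := hco (Phi2 ρ e Q K) rZ _ _
      _ = ∑ m ∈ rZ.index, εH (rZ.right m) •
            (((TensorProduct.mk k HH HH).flip K ∘ₗ EEr e 1 1 ∘ₗ ρ.flip Q ∘ₗ SH)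
              (rZ.left m)) := by
          apply Finset.sum_congr rfl; intro m _
          have : ∑ n ∈ (Coalgebra.Repr.arbitrary k (rZ.right m)).index,
              Phi2 ρ e Q K
                (rZ.left m ⊗ₜ[k]
                  ((Coalgebra.Repr.arbitrary k (rZ.right m)).left n ⊗ₜ[k]
                   (Coalgebra.Repr.arbitrary k (rZ.right m)).right n))
              = (∑ n ∈ (Coalgebra.Repr.arbitrary k (rZ.right m)).index,
                  EE e 1 (SH ((Coalgebra.Repr.arbitrary k (rZ.right m)).left n) *
                    (Coalgebra.Repr.arbitrary k (rZ.right m)).right n)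
                    (ρ (SH (rZ.left m)) Q)) ⊗ₜ[k] K := by
            rw [TensorProduct.sum_tmul]
            exact Finset.sum_congr rfl fun n _ => Phi2_tmul ρ e Q K _ _ _
          rw [this]
          have hsum : ∑ n ∈ (Coalgebra.Repr.arbitrary k (rZ.right m)).index,
              EE e 1 (SH ((Coalgebra.Repr.arbitrary k (rZ.right m)).left n) *
                (Coalgebra.Repr.arbitrary k (rZ.right m)).right n)
                (ρ (SH (rZ.left m)) Q)
              = εH (rZ.right m) • EE e 1 1 (ρ (SH (rZ.left m)) Q) := by
            have := congrArg (⇑(EEm e 1 (ρ (SH (rZ.left m)) Q)))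
              (HopfAlgebra.sum_antipode_mul_eq_smul
                (Coalgebra.Repr.arbitrary k (rZ.right m)))
            simp only [map_sum, map_smul, EEm_apply] at this
            exact this
          rw [hsum, ← TensorProduct.smul_tmul']
          rfl
      _ = _ := by
          rw [opR rZ (((TensorProduct.mk k HH HH).flip K ∘ₗ EEr e 1 1 ∘ₗ ρ.flip Q ∘ₗ SH))]
          rfl
  -- assemble
  rw [h0, map_sum]
  calc ∑ i ∈ r0.index, D.π2 (D.Δ (T (EE e P (r0.left i) 1)) *
        (EE e 1 (r0.right i) Q ⊗ₜ[k] (1 : HH)))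
      = ∑ i ∈ r0.index, D.π2 (∑ j ∈ (rA i).index,
          Phi0 δ ρ e P Q ((rA i).left j ⊗ₜ[k] ((rA i).right j ⊗ₜ[k] r0.right i))) := by
        exact Finset.sum_congr rfl fun i _ => h1 i
    _ = D.π2 (∑ i ∈ r0.index, ∑ j ∈ (rA i).index,
          Phi0 δ ρ e P Q ((rA i).left j ⊗ₜ[k] ((rA i).right j ⊗ₜ[k] r0.right i))) := by
        rw [map_sum]
    _ = D.π2 (∑ i ∈ r0.index, ∑ j ∈ (rY i).index,
          EE e 1 1 (ρ (SH ((rY i).right j)) Q) ⊗ₜ[k]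
            EE e 1 (SH ((rY i).left j)) (ρ (twistedAntipode δ (r0.left i)) P)) := by
        rw [h2]
        congr 1
        apply Finset.sum_congr rfl; intro i _
        rw [h3 i]
        exact Finset.sum_congr rfl fun j _ => h4 i j
    _ = ∑ i ∈ r0.index, ∑ j ∈ (rY i).index,
          D.π2 ((1 : HH) ⊗ₜ[k] (D.α (ρ (SH ((rY i).right j)) Q) *
            EE e 1 (SH ((rY i).left j)) (ρ (twistedAntipode δ (r0.left i)) P))) := by
        rw [map_sum]
        apply Finset.sum_congr rfl; intro i _
        rw [map_sum]
        apply Finset.sum_congr rfl; intro j _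
        rw [show EE e 1 1 (ρ (SH ((rY i).right j)) Q)
            = D.β (ρ (SH ((rY i).right j)) Q) from (hβ _).symm]
        exact pi2_beta_swap D _ _
    _ = D.π2 ((1 : HH) ⊗ₜ[k] T (EE e P h Q)) := by
        rw [TEE δ ρ e T hT P h Q r0 rY]
        rw [TensorProduct.tmul_sum, map_sum]
        apply Finset.sum_congr rfl; intro i _
        rw [TensorProduct.tmul_sum, map_sum]
        apply Finset.sum_congr rfl; intro j _
        congr 2
        rw [hα]
        have := oneMulEE ρ e hemul hρ1 (ρ (SH ((rY i).right j)) Q) 1 1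
          (SH ((rY i).left j)) (ρ (twistedAntipode δ (r0.left i)) P)
        rw [hρ1, mul_one, mul_one] at this
        exact this

end StepG

end Key
end DCPAux




section SubsingletonAux
lemma subsingleton_tmul_left {R M N : Type} [CommSemiring R] [AddCommMonoid M]
    [AddCommMonoid N] [Module R M] [Module R N] [Subsingleton M] :
    Subsingleton (TensorProduct R M N) := by
  constructor
  intro a b
  have key : ∀ x : TensorProduct R M N, x = 0 := by
    intro x
    induction x using TensorProduct.induction_on with
    | zero => rfl
    | tmul m n => rw [Subsingleton.elim m 0, TensorProduct.zero_tmul]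
    | add u v hu hv => rw [hu, hv, add_zero]
  rw [key a, key b]
end SubsingletonAux

open Coalgebra MulOpposite in
/-- in the double crossed product bialgebroid `H = 𝒫 ⋊ 𝓗 ⋉ 𝒫ᵒᵖ` with
`T(P⋊h⋉Q) = S(h⁽³⁾)(Q) ⋊ S(h⁽²⁾) ⋉ S̃_δ(h⁽¹⁾)(P)`, the identity
`T(𝔥⁽¹⁾)⁽¹⁾𝔥⁽²⁾ ⊗_𝒫 T(𝔥⁽¹⁾)⁽²⁾ = 1 ⊗_𝒫 T(𝔥)` holds for every `𝔥 = P⋊h⋉Q`. -/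
theorem doubleCrossedProduct_cyclic_identity
    {k 𝓗 PAlg HH : Type} [Field k] [Ring 𝓗] [HopfAlgebra k 𝓗]
    [Ring PAlg] [Algebra k PAlg] [Ring HH] [Algebra k HH]
    (δ : 𝓗 →ₐ[k] k)
    (ρ : 𝓗 →ₗ[k] PAlg →ₗ[k] PAlg)
    (hρ1 : ∀ p : PAlg, ρ 1 p = p)
    (hρmul : ∀ (g h : 𝓗) (p : PAlg), ρ (g * h) p = ρ g (ρ h p))
    (hρalg1 : ∀ h : 𝓗, ρ h (1 : PAlg) = counit (R := k) h • (1 : PAlg))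
    (e : (PAlg ⊗[k] (𝓗 ⊗[k] PAlg)) ≃ₗ[k] HH)
    (he1 : e ((1 : PAlg) ⊗ₜ[k] ((1 : 𝓗) ⊗ₜ[k] (1 : PAlg))) = 1)
    (hemul : ∀ (P₁ P₂ Q₁ Q₂ : PAlg) (h₁ h₂ : 𝓗),
      e (P₁ ⊗ₜ[k] (h₁ ⊗ₜ[k] Q₁)) * e (P₂ ⊗ₜ[k] (h₂ ⊗ₜ[k] Q₂)) =
        e (dcpMul ρ P₁ P₂ Q₁ Q₂ h₂ (comul2 h₁)))
    (D : PreBialgebroid k HH PAlg) (hD : D.IsBialgebroid)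
    (hα : ∀ P : PAlg, D.α P = e (P ⊗ₜ[k] ((1 : 𝓗) ⊗ₜ[k] (1 : PAlg))))
    (hβ : ∀ Q : PAlg, D.β Q = e ((1 : PAlg) ⊗ₜ[k] ((1 : 𝓗) ⊗ₜ[k] Q)))
    (hΔ : ∀ (P Q : PAlg) (h : 𝓗),
      D.π2 (D.Δ (e (P ⊗ₜ[k] (h ⊗ₜ[k] Q)))) = D.π2 (dcpΔ e P Q (comul h)))
    (hε : ∀ (P Q : PAlg) (h : 𝓗),
      D.ε (e (P ⊗ₜ[k] (h ⊗ₜ[k] Q))) = counit (R := k) h • (P * Q))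
    (T : HH →ₗ[k] HH)
    (hT : ∀ (P Q : PAlg) (h : 𝓗),
      T (e (P ⊗ₜ[k] (h ⊗ₜ[k] Q))) = e (dcpT ρ δ P Q (comul2 h))) :
    ∀ (P Q : PAlg) (h : 𝓗),
      D.π2 (PreBialgebroid.tau2 D T (D.Δ (e (P ⊗ₜ[k] (h ⊗ₜ[k] Q))))) =
        D.π2 ((1 : HH) ⊗ₜ[k] T (e (P ⊗ₜ[k] (h ⊗ₜ[k] Q)))) := by
  intro P Q h
  by_cases hone : (1 : PAlg) = 0
  · haveI hsP : Subsingleton PAlg := by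
      constructor
      intro a b
      have key : ∀ x : PAlg, x = 0 := fun x => by
        calc x = x * 1 := (mul_one x).symm
          _ = x * 0 := by rw [hone]
          _ = 0 := mul_zero x
      rw [key a, key b]
    haveI h1 : Subsingleton (PAlg ⊗[k] (𝓗 ⊗[k] PAlg)) := subsingleton_tmul_left
    haveI h2 : Subsingleton HH := by
      constructor
      intro a b
      calc a = e (e.symm a) := (e.apply_symm_apply a).symm
        _ = e (e.symm b) := by rw [Subsingleton.elim (e.symm a) (e.symm b)]
        _ = b := e.apply_symm_apply b
    haveI h3 : Subsingleton (HH ⊗[k] HH) := subsingleton_tmul_left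
    exact congrArg D.π2 (Subsingleton.elim _ _)
  · have hsplit : D.π2 (D.Δ (e (P ⊗ₜ[k] (h ⊗ₜ[k] Q)))) = D.π2 (dcpΔ e P Q (comul h)) :=
      hΔ P Q h
    have hz : D.Δ (e (P ⊗ₜ[k] (h ⊗ₜ[k] Q))) - dcpΔ e P Q (comul h) ∈ D.rel2 :=
      (pi2_eq_iff D).mp hsplit
    calc D.π2 (PreBialgebroid.tau2 D T (D.Δ (e (P ⊗ₜ[k] (h ⊗ₜ[k] Q)))))
        = D.π2 (PreBialgebroid.tau2 D T (dcpΔ e P Q (comul h))) +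
            D.π2 (PreBialgebroid.tau2 D T
              (D.Δ (e (P ⊗ₜ[k] (h ⊗ₜ[k] Q))) - dcpΔ e P Q (comul h))) := by
          rw [← map_add]
          congr 1
          rw [← map_add]
          congr 1
          abel
      _ = D.π2 (PreBialgebroid.tau2 D T (dcpΔ e P Q (comul h))) := by
          rw [descent δ ρ e hemul hρ1 hρalg1 hone T hT D hα hβ hΔ hz, add_zero]
      _ = D.π2 ((1 : HH) ⊗ₜ[k] T (e (P ⊗ₜ[k] (h ⊗ₜ[k] Q)))) :=
          stepG δ ρ e hemul hρ1 hρalg1 T hT D hα hβ hΔ P Q h
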